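/- Let Ψ₁ be a real symmetric positive definite L×L matrix that is irreducible, and set Ψ₂ := (Ψ₁^{-1} + I_L)^{-1}. Then the kernel of the positive semidefinite matrix F := Diag(diag(Ψ₁Ψ₂)) − Ψ₁⊙Ψ₂ is exactly the one-dimensional span of the all-ones vector 𝟙_L. -/

import Mathlib

open Matrix

/-- A square matrix is irreducible if there is no nonempty proper subset `S` of the index set
with `A i j = 0` for all `i ∈ S` and `j ∉ S`. -/
def MatrixIrreducible {L : ℕ} (A : Matrix (Fin L) (Fin L) ℝ) : Prop :=
  ¬ ∃ S : Finset (Fin L), S.Nonempty ∧ S ≠ Finset.univ ∧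
      ∀ i ∈ S, ∀ j ∉ S, A i j = 0

/-- for a real symmetric positive definite irreducible `Ψ₁` and
`Ψ₂ := (Ψ₁⁻¹ + I)⁻¹`, the kernel of the positive semidefinite matrix
`F := Diag(diag(Ψ₁Ψ₂)) − Ψ₁⊙Ψ₂` is exactly the span of the all-ones vector. -/
theorem stmt11 {L : ℕ} (hL : 0 < L)
    (Ψ₁ : Matrix (Fin L) (Fin L) ℝ) (hΨ₁ : Ψ₁.PosDef) (hIrr : MatrixIrreducible Ψ₁)
    (Ψ₂ : Matrix (Fin L) (Fin L) ℝ) (hΨ₂ : Ψ₂ = (Ψ₁⁻¹ + 1)⁻¹)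
    (F : Matrix (Fin L) (Fin L) ℝ)
    (hF : F = Matrix.diagonal (Matrix.diag (Ψ₁ * Ψ₂)) - Matrix.hadamard Ψ₁ Ψ₂) :
    F.PosSemidef ∧
      ∀ v : Fin L → ℝ, F *ᵥ v = 0 ↔ ∃ c : ℝ, v = fun _ => c := by
  classical
  -- basic algebraic setup
  have hAs : Ψ₁ᵀ = Ψ₁ := by
    have h := hΨ₁.isHermitian
    exact (by simpa [Matrix.conjTranspose_eq_transpose_of_trivial] using h : Ψ₁.IsSymm).eq
  have hAe : ∀ i j, Ψ₁ j i = Ψ₁ i j := fun i j => by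
    conv_lhs => rw [← hAs, Matrix.transpose_apply]
  have hAdet : IsUnit Ψ₁.det := hΨ₁.det_pos.ne'.isUnit
  have h1A : (1 + Ψ₁).PosDef := Matrix.PosDef.add Matrix.PosDef.one hΨ₁
  have h1Adet : IsUnit (1 + Ψ₁).det := h1A.det_pos.ne'.isUnit
  set M : Matrix (Fin L) (Fin L) ℝ := (1 + Ψ₁)⁻¹ with hMdef
  have hMl : M * (1 + Ψ₁) = 1 := Matrix.nonsing_inv_mul _ h1Adet
  have hMr : (1 + Ψ₁) * M = 1 := Matrix.mul_nonsing_inv _ h1Adet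
  have hAM : Ψ₁ * M = 1 - M := by
    calc Ψ₁ * M = (1 + Ψ₁) * M - M := by noncomm_ring
    _ = 1 - M := by rw [hMr]
  have hMA : M * Ψ₁ = 1 - M := by
    calc M * Ψ₁ = M * (1 + Ψ₁) - M := by noncomm_ring
    _ = 1 - M := by rw [hMl]
  have hMP : M.PosDef := h1A.inv
  have hMs : Mᵀ = M := by
    rw [hMdef, Matrix.transpose_nonsing_inv, Matrix.transpose_add, Matrix.transpose_one, hAs]
  have hinvA : Ψ₁⁻¹ * Ψ₁ = 1 := Matrix.nonsing_inv_mul _ hAdet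
  have hP2 : Ψ₂ = 1 - M := by
    rw [hΨ₂]
    apply Matrix.inv_eq_right_inv
    have key : (Ψ₁⁻¹ + 1) * M = Ψ₁⁻¹ := by
      have h' : Ψ₁⁻¹ * (1 + Ψ₁) = Ψ₁⁻¹ + 1 := by rw [mul_add, mul_one, hinvA]
      rw [← h', mul_assoc, hMr, mul_one]
    calc (Ψ₁⁻¹ + 1) * (1 - M) = (Ψ₁⁻¹ + 1) - (Ψ₁⁻¹ + 1) * M := by noncomm_ring
    _ = 1 := by rw [key]; abel
  have hP2s : Ψ₂ᵀ = Ψ₂ := by rw [hP2, Matrix.transpose_sub, Matrix.transpose_one, hMs]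
  have hP2e : ∀ i j, Ψ₂ j i = Ψ₂ i j := fun i j => by
    conv_lhs => rw [← hP2s, Matrix.transpose_apply]
  have hcomm : Ψ₁ * Ψ₂ = Ψ₂ * Ψ₁ := by
    rw [hP2, mul_sub, sub_mul, mul_one, one_mul, hAM, hMA]
  -- square root of M
  have hMPS : M.PosSemidef := hMP.posSemidef
  open scoped MatrixOrder in set S : Matrix (Fin L) (Fin L) ℝ := CFC.sqrt M with hSdef
  open scoped MatrixOrder in have hSS : S * S = M := CFC.sqrt_mul_sqrt_self M hMPS.nonneg
  open scoped MatrixOrder in have hSherm : S.PosSemidef := (CFC.sqrt_nonneg M).posSemidef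
  have hSs : Sᵀ = S := by
    have h := hSherm.1
    exact (by simpa [Matrix.conjTranspose_eq_transpose_of_trivial] using h : S.IsSymm).eq
  have hSdet' : IsUnit S.det := by
    refine isUnit_iff_ne_zero.mpr fun h => ?_
    have : S.det * S.det = M.det := by rw [← Matrix.det_mul, hSS]
    rw [h, mul_zero] at this
    exact hMP.det_pos.ne' this.symm
  have hSl : S⁻¹ * S = 1 := Matrix.nonsing_inv_mul _ hSdet'
  have hSr : S * S⁻¹ = 1 := Matrix.mul_nonsing_inv _ hSdet'
  -- the key quadratic-form facts
  have quad : ∀ v : Fin L → ℝ,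
      (0 ≤ v ⬝ᵥ (F *ᵥ v)) ∧ (v ⬝ᵥ (F *ᵥ v) = 0 → ∀ i j, Ψ₁ i j * (v i - v j) = 0) := by
    intro v
    set D : Matrix (Fin L) (Fin L) ℝ := Matrix.diagonal v with hD
    set C : Matrix (Fin L) (Fin L) ℝ := D * Ψ₁ - Ψ₁ * D with hC
    set X : Matrix (Fin L) (Fin L) ℝ := S * C * S with hX
    have hDs : Dᵀ = D := Matrix.diagonal_transpose v
    have hCt : Cᵀ = -C := by
      rw [hC, Matrix.transpose_sub, Matrix.transpose_mul, Matrix.transpose_mul, hAs, hDs]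
      exact (neg_sub _ _).symm
    have hcomm2 : D * Ψ₂ - Ψ₂ * D = M * (C * M) := by
      have h1 : M * (C * M) = M * (D * (Ψ₁ * M)) - (M * Ψ₁) * (D * M) := by
        rw [hC]; noncomm_ring
      rw [h1, hAM, hMA, hP2]; noncomm_ring
    have t0 : Matrix.trace (Xᵀ * X) = Matrix.trace (Cᵀ * (M * (C * M))) := by
      have hXt : Xᵀ = S * (Cᵀ * S) := by
        rw [hX, Matrix.transpose_mul, Matrix.transpose_mul, hSs]
      calc Matrix.trace (Xᵀ * X) = Matrix.trace (S * (Cᵀ * (S * X))) := by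
            rw [hXt, mul_assoc, mul_assoc]
      _ = Matrix.trace ((Cᵀ * (S * X)) * S) := Matrix.trace_mul_comm _ _
      _ = Matrix.trace (Cᵀ * (M * (C * M))) := by
          have : (Cᵀ * (S * X)) * S = Cᵀ * ((S * S) * (C * (S * S))) := by
            rw [hX]; noncomm_ring
          rw [this, hSS]
    have t1 : Matrix.trace (Cᵀ * (M * (C * M))) = - Matrix.trace (C * (D * Ψ₂ - Ψ₂ * D)) := by
      rw [hCt, ← hcomm2, neg_mul, Matrix.trace_neg]
    have t2 : Matrix.trace (C * (D * Ψ₂ - Ψ₂ * D))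
        = 2 * Matrix.trace (D * (Ψ₁ * (D * Ψ₂))) - 2 * Matrix.trace (D * (D * (Ψ₁ * Ψ₂))) := by
      have hexp : C * (D * Ψ₂ - Ψ₂ * D)
          = D * (Ψ₁ * (D * Ψ₂)) - (D * (Ψ₁ * Ψ₂)) * D - Ψ₁ * (D * (D * Ψ₂))
            + (Ψ₁ * (D * Ψ₂)) * D := by
        rw [hC]; noncomm_ring
      rw [hexp, Matrix.trace_add, Matrix.trace_sub, Matrix.trace_sub,
        Matrix.trace_mul_comm (D * (Ψ₁ * Ψ₂)) D, Matrix.trace_mul_comm Ψ₁ (D * (D * Ψ₂)),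
        Matrix.trace_mul_comm (Ψ₁ * (D * Ψ₂)) D]
      have h2 : (D * (D * Ψ₂)) * Ψ₁ = D * (D * (Ψ₁ * Ψ₂)) := by
        calc (D * (D * Ψ₂)) * Ψ₁ = D * (D * (Ψ₂ * Ψ₁)) := by noncomm_ring
        _ = D * (D * (Ψ₁ * Ψ₂)) := by rw [hcomm]
      rw [h2]; ring
    have t3 : v ⬝ᵥ (F *ᵥ v)
        = Matrix.trace (D * (D * (Ψ₁ * Ψ₂))) - Matrix.trace (D * (Ψ₁ * (D * Ψ₂))) := by
      rw [hF, Matrix.sub_mulVec, dotProduct_sub]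
      congr 1
      · simp only [Matrix.trace, Matrix.diag, dotProduct, hD, Matrix.diagonal_mul,
          Matrix.mulVec_diagonal]
        exact Finset.sum_congr rfl fun i _ => by ring
      · simp only [Matrix.trace, Matrix.diag, dotProduct, Matrix.mulVec, hD,
          Matrix.mul_apply, Matrix.hadamard_apply, Matrix.diagonal_apply, ite_mul, zero_mul,
          Finset.sum_ite_eq, Finset.sum_ite_eq', Finset.mem_univ, if_true]
        refine Finset.sum_congr rfl fun i _ => ?_
        rw [Finset.mul_sum, Finset.mul_sum]
        refine Finset.sum_congr rfl fun j _ => ?_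
        rw [hP2e j i]
        ring
    have hQ : 2 * (v ⬝ᵥ (F *ᵥ v)) = Matrix.trace (Xᵀ * X) := by
      rw [t3, t0, t1, t2]; ring
    have htr : Matrix.trace (Xᵀ * X) = ∑ j, ∑ i, (X i j)^2 := by
      simp [Matrix.trace, Matrix.diag, Matrix.mul_apply, Matrix.transpose_apply, sq]
    have htrnn : 0 ≤ Matrix.trace (Xᵀ * X) := by
      rw [htr]
      exact Finset.sum_nonneg fun j _ => Finset.sum_nonneg fun i _ => sq_nonneg _
    constructor
    · linarith
    · intro h0
      have hX0 : X = 0 := by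
        have hz : ∑ j, ∑ i, (X i j)^2 = 0 := by rw [← htr, ← hQ, h0]; ring
        ext i j
        have h1 := (Finset.sum_eq_zero_iff_of_nonneg
          (fun j _ => Finset.sum_nonneg fun i _ => sq_nonneg (X i j))).mp hz j (Finset.mem_univ j)
        have h2 := (Finset.sum_eq_zero_iff_of_nonneg
          (fun i _ => sq_nonneg (X i j))).mp h1 i (Finset.mem_univ i)
        simpa using pow_eq_zero_iff (n := 2) (by norm_num) |>.mp h2
      have hC0 : C = 0 := by
        have h1 : S⁻¹ * X * S⁻¹ = C := by
          have : S⁻¹ * X * S⁻¹ = (S⁻¹ * S) * C * (S * S⁻¹) := by rw [hX]; noncomm_ring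
          rw [this, hSl, hSr, one_mul, mul_one]
        rw [hX0] at h1
        simpa using h1.symm
      intro i j
      have h := congrFun (congrFun hC0 i) j
      simp only [hC, hD, Matrix.sub_apply, Matrix.diagonal_mul, Matrix.mul_diagonal,
        Matrix.zero_apply] at h
      linear_combination h
  -- Hermitian
  have hFherm : F.IsHermitian := by
    have : Fᵀ = F := by
      ext i j
      simp only [hF, Matrix.transpose_apply, Matrix.sub_apply, Matrix.diagonal_apply,
        Matrix.hadamard_apply]
      rw [hAe j i, hP2e j i]
      by_cases h : i = j
      · subst h; simp
      · simp [h, Ne.symm h]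
    rw [Matrix.IsHermitian, Matrix.conjTranspose_eq_transpose_of_trivial, this]
  constructor
  · exact .of_dotProduct_mulVec_nonneg hFherm fun x => by simpa using (quad x).1
  · intro v
    constructor
    · intro hFv
      have hker : ∀ i j, Ψ₁ i j * (v i - v j) = 0 := (quad v).2 (by rw [hFv]; simp)
      set i0 : Fin L := ⟨0, hL⟩ with hi0
      refine ⟨v i0, ?_⟩
      set T : Finset (Fin L) := Finset.univ.filter (fun i => v i = v i0) with hT
      have hTuniv : T = Finset.univ := by
        by_contra hne
        refine hIrr ⟨T, ⟨i0, by simp [hT]⟩, hne, fun i hi j hj => ?_⟩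
        have hvi : v i = v i0 := by simpa [hT] using hi
        have hvj : v j ≠ v i0 := by simpa [hT] using hj
        have hsub : v i - v j ≠ 0 := by
          rw [hvi]; intro h; exact hvj (by linarith [sub_eq_zero.mp h])
        rcases mul_eq_zero.mp (hker i j) with h | h
        · exact h
        · exact absurd h hsub
      funext j
      have : j ∈ T := hTuniv ▸ Finset.mem_univ j
      simpa [hT] using this
    · rintro ⟨c, rfl⟩
      funext i
      have : (F *ᵥ fun _ => c) i
          = (∑ j, Ψ₁ i j * Ψ₂ j i) * c - (∑ j, Ψ₁ i j * Ψ₂ i j) * c := by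
        simp only [hF, Matrix.mulVec, dotProduct, Matrix.sub_apply, Matrix.diagonal_apply,
          Matrix.hadamard_apply, Matrix.diag, Matrix.mul_apply, sub_mul, ite_mul, zero_mul,
          Finset.sum_sub_distrib, Finset.sum_ite_eq, Finset.mem_univ, if_true,
          Finset.sum_mul]
      rw [this]
      have : (∑ j, Ψ₁ i j * Ψ₂ j i) = ∑ j, Ψ₁ i j * Ψ₂ i j :=
        Finset.sum_congr rfl fun j _ => by rw [hP2e j i]
      rw [this, sub_self]
      rfl
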